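/- For every n ≥ 0, the number of walks of length n on the diagonal square lattice (steps (1,1), (1,−1), (−1,1), (−1,−1)) that start at (0,0) and stay in the quadrant x ≥ 0, y ≥ 0 equals C(n, ⌊n/2⌋)², where C(a,b) denotes the binomial coefficient. -/

import Mathlib

/-- The number of `n`-step walks on the diagonal square lattice (steps NE, SE, NW, SW)
starting at the origin and confined to the quadrant `x ≥ 0, y ≥ 0`. -/
noncomputable def diagQuadrantCount (n : ℕ) : ℕ :=
  Nat.card {w : Fin (n + 1) → ℤ × ℤ //
    w 0 = (0, 0) ∧
    (∀ k : Fin n, w k.succ - w k.castSucc ∈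
      ({(1, 1), (1, -1), (-1, 1), (-1, -1)} : Set (ℤ × ℤ))) ∧
    ∀ k, 0 ≤ (w k).1 ∧ 0 ≤ (w k).2}


open Finset

def IsWalk (n : ℕ) (w : Fin (n+1) → ℤ) : Prop :=
  w 0 = 0 ∧ (∀ k : Fin n, w k.succ - w k.castSucc ∈ ({1, -1} : Set ℤ)) ∧ ∀ k, 0 ≤ w k

abbrev S1 (n : ℕ) := {w : Fin (n+1) → ℤ // IsWalk n w}

abbrev T (n : ℕ) (h : ℤ) := {w : Fin (n+1) → ℤ // IsWalk n w ∧ w (Fin.last n) = h}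

lemma walk_le {n : ℕ} {w : Fin (n+1) → ℤ} (hw : IsWalk n w) (k : Fin (n+1)) :
    w k ≤ (k : ℕ) := by
  induction k using Fin.induction with
  | zero => simp [hw.1]
  | succ k ih =>
    have hs := hw.2.1 k
    simp only [Set.mem_insert_iff, Set.mem_singleton_iff] at hs
    simp only [Fin.val_succ, Fin.coe_castSucc] at *
    push_cast
    omega

instance S1_finite (n : ℕ) : Finite (S1 n) := by
  have : ∀ (w : S1 n) (k : Fin (n+1)), w.1 k ∈ Set.Icc (0:ℤ) n := by
    rintro ⟨w, hw⟩ k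
    exact ⟨hw.2.2 k, (walk_le hw k).trans (by exact_mod_cast Nat.cast_le.mpr k.is_le)⟩
  apply Finite.of_injective (fun w : S1 n => fun k => (⟨w.1 k, this w k⟩ : Set.Icc (0:ℤ) n))
  intro a b hab
  apply Subtype.ext
  funext k
  exact congrArg Subtype.val (congrFun hab k)

instance T_finite (n : ℕ) (h : ℤ) : Finite (T n h) := by
  haveI := S1_finite n
  apply Finite.of_injective (fun w : T n h => (⟨w.1, w.2.1⟩ : S1 n))
  intro a b hab
  simp only [Subtype.mk.injEq] at hab
  exact Subtype.ext hab

lemma isWalk_init {n : ℕ} {w : Fin (n+2) → ℤ} (hw : IsWalk (n+1) w) :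
    IsWalk n (fun k => w k.castSucc) := by
  refine ⟨by simpa using hw.1, fun k => ?_, fun k => hw.2.2 _⟩
  have := hw.2.1 k.castSucc
  rw [Fin.succ_castSucc] at this
  exact this

lemma last_step {n : ℕ} {w : Fin (n+2) → ℤ} (hw : IsWalk (n+1) w) :
    w (Fin.last (n+1)) - w ((Fin.last n).castSucc) ∈ ({1, -1} : Set ℤ) := by
  have := hw.2.1 (Fin.last n)
  simpa [Fin.succ_last] using this

lemma isWalk_snoc {n : ℕ} {v : Fin (n+1) → ℤ} (hv : IsWalk n v) {h : ℤ} (hh : 0 ≤ h)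
    (hstep : h - v (Fin.last n) ∈ ({1, -1} : Set ℤ)) : IsWalk (n+1) (Fin.snoc v h) := by
  refine ⟨?_, fun k => ?_, fun k => ?_⟩
  · show (Fin.snoc v h : Fin (n+2) → ℤ) ((0 : Fin (n+1)).castSucc) = 0
    rw [Fin.snoc_castSucc]
    exact hv.1
  · induction k using Fin.lastCases with
    | last =>
      rw [Fin.succ_last, Fin.snoc_last, Fin.snoc_castSucc]
      exact hstep
    | cast j =>
      rw [Fin.succ_castSucc, Fin.snoc_castSucc, Fin.snoc_castSucc]
      exact hv.2.1 j
  · induction k using Fin.lastCases with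
    | last => rw [Fin.snoc_last]; exact hh
    | cast j => rw [Fin.snoc_castSucc]; exact hv.2.2 j

noncomputable def stepEquiv (n : ℕ) (h : ℤ) (hh : 0 ≤ h) :
    T (n+1) h ≃ T n (h-1) ⊕ T n (h+1) where
  toFun w :=
    if hl : w.1 ((Fin.last n).castSucc) = h - 1 then
      Sum.inl ⟨fun k => w.1 k.castSucc, isWalk_init w.2.1, hl⟩
    else
      Sum.inr ⟨fun k => w.1 k.castSucc, isWalk_init w.2.1, by
        have hs := last_step w.2.1
        rw [w.2.2] at hs
        simp only [Set.mem_insert_iff, Set.mem_singleton_iff] at hs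
        show w.1 ((Fin.last n).castSucc) = h + 1
        rcases hs with hs | hs
        · exact absurd (by omega) hl
        · omega⟩
  invFun v :=
    match v with
    | Sum.inl v => ⟨Fin.snoc v.1 h, isWalk_snoc v.2.1 hh (by
        rw [v.2.2]; left; omega), Fin.snoc_last _ _⟩
    | Sum.inr v => ⟨Fin.snoc v.1 h, isWalk_snoc v.2.1 hh (by
        rw [v.2.2]; right; simp), Fin.snoc_last _ _⟩
  left_inv := by
    rintro ⟨w, hw, hl⟩
    by_cases hc : w ((Fin.last n).castSucc) = h - 1 <;>
      simp only [hc, dif_pos, dif_neg, not_false_iff] <;>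
      · apply Subtype.ext
        show Fin.snoc (fun k => w k.castSucc) h = w
        rw [← hl]
        exact Fin.snoc_init_self w
  right_inv := by
    rintro (⟨v, hv, hl⟩ | ⟨v, hv, hl⟩)
    · have hc : (Fin.snoc v h : Fin (n+2) → ℤ) ((Fin.last n).castSucc) = h - 1 := by
        rw [Fin.snoc_castSucc]; exact hl
      simp only [hc, dif_pos]
      congr 1
      apply Subtype.ext
      funext k
      show (Fin.snoc v h : Fin (n+2) → ℤ) k.castSucc = v k
      rw [Fin.snoc_castSucc]
    · have hc : ¬ (Fin.snoc v h : Fin (n+2) → ℤ) ((Fin.last n).castSucc) = h - 1 := by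
        rw [Fin.snoc_castSucc, hl]; omega
      simp only [hc, dif_neg, not_false_iff]
      congr 1
      apply Subtype.ext
      funext k
      show (Fin.snoc v h : Fin (n+2) → ℤ) k.castSucc = v k
      rw [Fin.snoc_castSucc]

def Nf : ℕ → ℤ → ℕ
  | 0, h => if h = 0 then 1 else 0
  | n+1, h => if h < 0 then 0 else Nf n (h-1) + Nf n (h+1)

lemma Nf_neg {n : ℕ} {h : ℤ} (hh : h < 0) : Nf n h = 0 := by
  cases n with
  | zero => simp [Nf]; omega
  | succ n => simp [Nf, hh]

lemma card_T_neg (n : ℕ) {h : ℤ} (hh : h < 0) : Nat.card (T n h) = 0 := by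
  have : IsEmpty (T n h) := by
    constructor
    rintro ⟨w, hw, hl⟩
    have := hw.2.2 (Fin.last n)
    omega
  simp [Nat.card_eq_zero, this]

lemma card_T (n : ℕ) (h : ℤ) : Nat.card (T n h) = Nf n h := by
  induction n generalizing h with
  | zero =>
    simp only [Nf]
    by_cases hh : h = 0
    · subst hh
      rw [if_pos rfl]
      have : Nonempty (T 0 0) := ⟨⟨fun _ => 0, ⟨rfl, fun k => k.elim0, fun _ => le_refl 0⟩, rfl⟩⟩
      have : Subsingleton (T 0 0) := by
        constructor
        rintro ⟨w, hw, _⟩ ⟨v, hv, _⟩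
        apply Subtype.ext
        funext k
        have h0 : k = 0 := Fin.fin_one_eq_zero k
        rw [h0]
        show w 0 = v 0
        rw [hw.1, hv.1]
      exact Nat.card_unique
    · rw [if_neg hh]
      have : IsEmpty (T 0 h) := by
        constructor
        rintro ⟨w, hw, hl⟩
        exact hh (hl ▸ hw.1 ▸ rfl)
      simp [Nat.card_eq_zero, this]
  | succ n ih =>
    by_cases hh : h < 0
    · rw [card_T_neg _ hh, Nf_neg hh]
    · push_neg at hh
      rw [Nat.card_congr (stepEquiv n h hh), Nat.card_sum, ih, ih]
      simp only [Nf]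
      rw [if_neg (by omega)]

noncomputable def sigmaEquiv (n : ℕ) :
    S1 n ≃ Σ h : (Finset.Icc (0:ℤ) n : Finset ℤ), T n h.1 where
  toFun w := ⟨⟨w.1 (Fin.last n), by
      simp only [Finset.mem_Icc]
      exact ⟨w.2.2.2 _, (walk_le w.2 _).trans (by exact_mod_cast Nat.cast_le.mpr (Fin.last n).is_le)⟩⟩,
    ⟨w.1, w.2, rfl⟩⟩
  invFun p := ⟨p.2.1, p.2.2.1⟩
  left_inv w := rfl
  right_inv := by
    rintro ⟨⟨h, hm⟩, ⟨v, hv, hl⟩⟩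
    refine Sigma.ext (Subtype.ext ?_) ?_
    · exact hl
    · refine (Subtype.heq_iff_coe_eq ?_).mpr rfl
      intro x
      simp only [hl]

lemma card_S1 (n : ℕ) :
    Nat.card (S1 n) = ∑ h ∈ Finset.Icc (0:ℤ) n, Nf n h := by
  classical
  rw [Nat.card_congr (sigmaEquiv n)]
  haveI : ∀ h : (Finset.Icc (0:ℤ) n : Finset ℤ), Fintype (T n h.1) :=
    fun h => Fintype.ofFinite _
  rw [Nat.card_eq_fintype_card, Fintype.card_sigma]
  rw [← Finset.sum_attach (Finset.Icc (0:ℤ) n) (fun h => Nf n h)]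
  congr 1
  funext h
  rw [← card_T, Nat.card_eq_fintype_card]

lemma choose_succ_le {n j : ℕ} (hj : n ≤ 2 * j) : n.choose (j+1) ≤ n.choose j := by
  rcases le_or_gt n j with hn | hn
  · rw [Nat.choose_eq_zero_of_lt (by omega)]
    exact Nat.zero_le _
  · have h1 : n.choose (j+1) = n.choose (n - (j+1)) := by
      rw [Nat.choose_symm (by omega)]
    have h2 : n.choose j = n.choose (n - j) := by
      rw [Nat.choose_symm (by omega)]
    rw [h1, h2]
    have e : n - (j+1) + 1 = n - j := by omega
    have := Nat.choose_le_succ_of_lt_half_left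
      (show n - (j+1) < n / 2 by omega) (n := n)
    rwa [e] at this

def D (n h : ℕ) : ℕ :=
  if (n + h) % 2 = 0 then n.choose ((n+h)/2) - n.choose ((n+h)/2 + 1) else 0

lemma Drec0 (n : ℕ) : D (n+1) 0 = D n 1 := by
  unfold D
  rcases Nat.even_or_odd n with ⟨k, hk⟩ | ⟨k, hk⟩
  · rw [if_neg (by omega), if_neg (by omega)]
  · rw [if_pos (by omega), if_pos (by omega)]
    have e1 : (n+1+0)/2 = k+1 := by omega
    have e2 : (n+1)/2 = k+1 := by omega
    simp only [e1, e2, show k+1+1 = k+2 from rfl]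
    have q1 : (n+1).choose (k+1) = n.choose k + n.choose (k+1) := Nat.choose_succ_succ _ _
    have q2 : (n+1).choose (k+2) = n.choose (k+1) + n.choose (k+2) := Nat.choose_succ_succ _ _
    have sym : n.choose k = n.choose (k+1) := by
      have := Nat.choose_symm (show k ≤ n by omega)
      rw [show n - k = k + 1 by omega] at this
      exact this.symm
    have m2 : n.choose (k+2) ≤ n.choose (k+1) := choose_succ_le (by omega)
    omega

lemma Drec (n h : ℕ) : D (n+1) (h+1) = D n h + D n (h+2) := by
  unfold D
  rcases Nat.even_or_odd (n + h) with ⟨j, hj⟩ | ⟨j, hj⟩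
  · rw [if_pos (by omega), if_pos (by omega), if_pos (by omega)]
    have e1 : (n+1+(h+1))/2 = j+1 := by omega
    have e2 : (n+h)/2 = j := by omega
    have e3 : (n+(h+2))/2 = j+1 := by omega
    simp only [e1, e2, e3, show j+1+1 = j+2 from rfl]
    have q1 : (n+1).choose (j+1) = n.choose j + n.choose (j+1) := Nat.choose_succ_succ _ _
    have q2 : (n+1).choose (j+2) = n.choose (j+1) + n.choose (j+2) := Nat.choose_succ_succ _ _
    have m1 : n.choose (j+1) ≤ n.choose j := choose_succ_le (by omega)
    have m2 : n.choose (j+2) ≤ n.choose (j+1) := choose_succ_le (by omega)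
    omega
  · rw [if_neg (by omega), if_neg (by omega), if_neg (by omega)]

lemma Nf_eq_D : ∀ n h : ℕ, Nf n (h : ℤ) = D n h := by
  intro n
  induction n with
  | zero =>
    intro h
    simp only [Nf, D]
    cases h with
    | zero => norm_num
    | succ h =>
      rw [if_neg (by exact_mod_cast Nat.succ_ne_zero h)]
      rcases Nat.even_or_odd (h+1) with ⟨k, hk⟩ | ⟨k, hk⟩
      · rw [if_pos (by omega)]
        rw [Nat.choose_eq_zero_of_lt (by omega), Nat.choose_eq_zero_of_lt (by omega)]
      · rw [if_neg (by omega)]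
  | succ n ih =>
    intro h
    cases h with
    | zero =>
      show Nf (n+1) 0 = _
      simp only [Nf]
      rw [if_neg (by omega)]
      have h1 : (0:ℤ) - 1 = -1 := by norm_num
      rw [h1, Nf_neg (by omega)]
      have h2 : (0:ℤ) + 1 = ((1:ℕ) : ℤ) := by norm_num
      rw [h2, ih 1, Drec0]
      omega
    | succ h =>
      show Nf (n+1) ((h+1 : ℕ) : ℤ) = _
      simp only [Nf]
      rw [if_neg (by push_cast; omega)]
      have h1 : ((h+1 : ℕ) : ℤ) - 1 = ((h : ℕ) : ℤ) := by push_cast; ring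
      have h2 : ((h+1 : ℕ) : ℤ) + 1 = ((h+2 : ℕ) : ℤ) := by push_cast; ring
      rw [h1, h2, ih h, ih (h+2), Drec]

lemma D_big (n h : ℕ) (hh : n < h) : D n h = 0 := by
  unfold D
  rcases Nat.even_or_odd (n + h) with ⟨j, hj⟩ | ⟨j, hj⟩
  · rw [if_pos (by omega)]
    rw [Nat.choose_eq_zero_of_lt (by omega), Nat.choose_eq_zero_of_lt (by omega)]
  · rw [if_neg (by omega)]

lemma Dsum (n : ℕ) : ∑ h ∈ range (n+1), D n h = n.choose ((n+1)/2) := by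
  induction n with
  | zero => simp [D]
  | succ n ih =>
    show ∑ h ∈ range (n+2), D (n+1) h = (n+1).choose ((n+2)/2)
    have h1 : ∑ h ∈ range (n+2), D (n+1) h
        = (∑ h ∈ range (n+1), D (n+1) (h+1)) + D (n+1) 0 :=
      Finset.sum_range_succ' _ _
    have h2 : ∑ h ∈ range (n+1), D (n+1) (h+1)
        = (∑ h ∈ range (n+1), D n h) + ∑ h ∈ range (n+1), D n (h+2) := by
      rw [← Finset.sum_add_distrib]
      exact Finset.sum_congr rfl fun h _ => Drec n h
    have h4 : ∑ h ∈ range (n+3), D n h = ∑ h ∈ range (n+1), D n h := by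
      rw [Finset.sum_range_succ, Finset.sum_range_succ, D_big n (n+2) (by omega),
        D_big n (n+1) (by omega)]
      omega
    have key : ((∑ h ∈ range (n+1), D n (h+2)) + D n 1) + D n 0
        = ∑ h ∈ range (n+1), D n h := by
      rw [← h4, Finset.sum_range_succ' (fun h => D n h) (n+2),
        Finset.sum_range_succ' (fun h => D n (h+1)) (n+1)]
      try simp only [show ∀ x : ℕ, x+1+1 = x+2 from fun _ => rfl, Nat.zero_add]
      try omega
    rw [h1, h2, Drec0]
    rcases Nat.even_or_odd n with ⟨m, hm⟩ | ⟨m, hm⟩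
    · rw [show (n+1)/2 = m by omega] at ih
      rw [show (n+2)/2 = m+1 by omega]
      have hd0 : D n 0 = n.choose m - n.choose (m+1) := by
        unfold D
        rw [if_pos (by omega), show (n+0)/2 = m by omega]
      have hd1 : D n 1 = 0 := by
        unfold D
        rw [if_neg (by omega)]
      have pas : (n+1).choose (m+1) = n.choose m + n.choose (m+1) := Nat.choose_succ_succ _ _
      have m1 : n.choose (m+1) ≤ n.choose m := choose_succ_le (by omega)
      omega
    · rw [show (n+1)/2 = m+1 by omega] at ih
      rw [show (n+2)/2 = m+1 by omega]
      have hd0 : D n 0 = 0 := by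
        unfold D
        rw [if_neg (by omega)]
      have hd1 : D n 1 = n.choose (m+1) - n.choose (m+2) := by
        unfold D
        rw [if_pos (by omega), show (n+1)/2 = m+1 by omega, show m+1+1 = m+2 from rfl]
      have pas : (n+1).choose (m+1) = n.choose m + n.choose (m+1) := Nat.choose_succ_succ _ _
      have sym : n.choose m = n.choose (m+1) := by
        have := Nat.choose_symm (show m ≤ n by omega)
        rw [show n - m = m + 1 by omega] at this
        exact this.symm
      have m2 : n.choose (m+2) ≤ n.choose (m+1) := choose_succ_le (by omega)
      omega

lemma card_S1' (n : ℕ) : Nat.card (S1 n) = n.choose (n/2) := by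
  rw [card_S1]
  have hI : Finset.Icc (0:ℤ) n = (Finset.range (n+1)).image (fun k : ℕ => (k:ℤ)) := by
    ext a
    simp only [Finset.mem_image, Finset.mem_Icc, Finset.mem_range]
    constructor
    · rintro ⟨h0, h1⟩
      exact ⟨a.toNat, by omega, by omega⟩
    · rintro ⟨b, hb, rfl⟩
      omega
  rw [hI, Finset.sum_image (by intro x _ y _ h; exact Nat.cast_injective h)]
  rw [Finset.sum_congr rfl fun h _ => Nf_eq_D n h, Dsum]
  rcases Nat.even_or_odd n with ⟨m, hm⟩ | ⟨m, hm⟩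
  · rw [show (n+1)/2 = n/2 by omega]
  · rw [show (n+1)/2 = m+1 by omega, show n/2 = m by omega]
    have := Nat.choose_symm (show m ≤ n by omega)
    rw [show n - m = m + 1 by omega] at this
    exact this

lemma mem4 (p : ℤ × ℤ) :
    p ∈ ({(1, 1), (1, -1), (-1, 1), (-1, -1)} : Set (ℤ × ℤ)) ↔
      p.1 ∈ ({1, -1} : Set ℤ) ∧ p.2 ∈ ({1, -1} : Set ℤ) := by
  rcases p with ⟨a, b⟩
  simp only [Set.mem_insert_iff, Set.mem_singleton_iff, Prod.mk.injEq]
  tauto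

def QW (n : ℕ) := {w : Fin (n + 1) → ℤ × ℤ //
    w 0 = (0, 0) ∧
    (∀ k : Fin n, w k.succ - w k.castSucc ∈
      ({(1, 1), (1, -1), (-1, 1), (-1, -1)} : Set (ℤ × ℤ))) ∧
    ∀ k, 0 ≤ (w k).1 ∧ 0 ≤ (w k).2}

def prodEquiv (n : ℕ) : QW n ≃ S1 n × S1 n where
  toFun w :=
    (⟨fun k => (w.1 k).1,
      congrArg Prod.fst w.2.1,
      fun k => ((mem4 _).mp (w.2.2.1 k)).1,
      fun k => (w.2.2.2 k).1⟩,
     ⟨fun k => (w.1 k).2,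
      congrArg Prod.snd w.2.1,
      fun k => ((mem4 _).mp (w.2.2.1 k)).2,
      fun k => (w.2.2.2 k).2⟩)
  invFun p :=
    ⟨fun k => (p.1.1 k, p.2.1 k),
     by show (p.1.1 0, p.2.1 0) = (0,0); rw [p.1.2.1, p.2.2.1],
     fun k => (mem4 _).mpr ⟨p.1.2.2.1 k, p.2.2.2.1 k⟩,
     fun k => ⟨p.1.2.2.2 k, p.2.2.2.2 k⟩⟩
  left_inv w := rfl
  right_inv p := rfl



/-- The number of `n`-step quadrant walks on the diagonal square lattice starting at the
origin is `C(n, ⌊n/2⌋)²`. -/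
theorem diagQuadrantCount_eq (n : ℕ) :
    diagQuadrantCount n = Nat.choose n (n / 2) ^ 2 := by
  have h : diagQuadrantCount n = Nat.card (QW n) := rfl
  rw [h, Nat.card_congr (prodEquiv n), Nat.card_prod, card_S1', sq]
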